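/- Let f : ℝ^p → ℝ be twice continuously differentiable with ∇²f(θ) ⪰ m·I for all θ (m > 0). Let θ ∈ ℝ^p, and suppose H(θ) ∈ ℝ^{p×p} satisfies ‖H(θ) − ∇²f(θ)‖₂ ≤ γ_h ≤ m/2, and let g(θ) ∈ ℝ^p be arbitrary. Set Δθ_nt = −H(θ)⁻¹g(θ) and λ̃(θ)² = g(θ)ᵀH(θ)⁻¹g(θ). Then Δθ_ntᵀ ∇²f(θ) Δθ_nt ≤ λ̃(θ)²·(1 + 2γ_h/m). -/

import Mathlib

open scoped RealInnerProductSpace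

/-- The Hessian of `f`, as the Fréchet derivative of the gradient. -/
noncomputable def hessianOf {p : ℕ} (f : EuclideanSpace ℝ (Fin p) → ℝ)
    (θ : EuclideanSpace ℝ (Fin p)) :
    EuclideanSpace ℝ (Fin p) →L[ℝ] EuclideanSpace ℝ (Fin p) :=
  fderiv ℝ (gradient f) θ

/-- the Hessian quadratic form along the noisy Newton step is close
to the noisy Newton decrement. -/
theorem noisy_newton_hessian_quadratic_form {p : ℕ} (f : EuclideanSpace ℝ (Fin p) → ℝ)
    (m γh : ℝ) (hm : 0 < m)
    (hf : ContDiff ℝ 2 f)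
    (hconv : ∀ θ' v : EuclideanSpace ℝ (Fin p), m * ‖v‖ ^ 2 ≤ ⟪hessianOf f θ' v, v⟫)
    (θ : EuclideanSpace ℝ (Fin p))
    (g : EuclideanSpace ℝ (Fin p))
    (H : EuclideanSpace ℝ (Fin p) →L[ℝ] EuclideanSpace ℝ (Fin p))
    (hH : ‖H - hessianOf f θ‖ ≤ γh) (hγhm : γh ≤ m / 2)
    (Δ : EuclideanSpace ℝ (Fin p)) (hΔ : Δ = -(H.inverse g))
    (lam2 : ℝ) (hlam2 : lam2 = ⟪g, H.inverse g⟫) :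
    ⟪hessianOf f θ Δ, Δ⟫ ≤ lam2 * (1 + 2 * γh / m) := by
  set A := hessianOf f θ with hA
  have hγh0 : 0 ≤ γh := le_trans (norm_nonneg _) hH
  -- error bound
  have hE : ∀ v : EuclideanSpace ℝ (Fin p), |⟪(H - A) v, v⟫| ≤ γh * ‖v‖ ^ 2 := by
    intro v
    calc |⟪(H - A) v, v⟫| ≤ ‖(H - A) v‖ * ‖v‖ := abs_real_inner_le_norm _ _
    _ ≤ (‖H - A‖ * ‖v‖) * ‖v‖ := by
        gcongr; exact (H - A).le_opNorm v
    _ ≤ (γh * ‖v‖) * ‖v‖ := by gcongr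
    _ = γh * ‖v‖ ^ 2 := by ring
  have hsplit : ∀ v : EuclideanSpace ℝ (Fin p), ⟪H v, v⟫ = ⟪A v, v⟫ + ⟪(H - A) v, v⟫ := by
    intro v
    have h : (H - A) v = H v - A v := rfl
    rw [h, inner_sub_left]; ring
  have hcoerc : ∀ v : EuclideanSpace ℝ (Fin p), (m / 2) * ‖v‖ ^ 2 ≤ ⟪H v, v⟫ := by
    intro v
    have h1 := hconv θ v
    have h2 := (abs_le.mp (hE v)).1
    have : (m - γh) * ‖v‖ ^ 2 ≤ ⟪H v, v⟫ := by
      rw [hsplit v]; nlinarith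
    nlinarith [sq_nonneg ‖v‖]
  have hinj : Function.Injective H := by
    intro a b hab
    have h : H (a - b) = 0 := by rw [map_sub, hab, sub_self]
    have := hcoerc (a - b)
    rw [h, inner_zero_left] at this
    have hn : ‖a - b‖ ^ 2 ≤ 0 := by nlinarith
    have : a - b = 0 := by
      have := sq_nonneg ‖a - b‖
      have h0 : ‖a - b‖ ^ 2 = 0 := le_antisymm hn this
      simpa [pow_eq_zero_iff] using h0
    exact sub_eq_zero.mp this
  have hbij : Function.Bijective H :=
    ⟨hinj, (LinearMap.injective_iff_surjective (f := (H : EuclideanSpace ℝ (Fin p) →ₗ[ℝ] EuclideanSpace ℝ (Fin p)))).mp hinj⟩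
  let e : EuclideanSpace ℝ (Fin p) ≃L[ℝ] EuclideanSpace ℝ (Fin p) :=
    (LinearEquiv.ofBijective (H : EuclideanSpace ℝ (Fin p) →ₗ[ℝ] EuclideanSpace ℝ (Fin p)) hbij).toContinuousLinearEquiv
  have he : (e : EuclideanSpace ℝ (Fin p) →L[ℝ] EuclideanSpace ℝ (Fin p)) = H := by
    ext v; rfl
  have hinv : H.inverse = (e.symm : EuclideanSpace ℝ (Fin p) →L[ℝ] EuclideanSpace ℝ (Fin p)) := by
    rw [← he, ContinuousLinearMap.inverse_equiv]
  set x := H.inverse g with hx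
  have hHx : H x = g := by
    rw [hx, hinv]
    have : H (e.symm g) = e (e.symm g) := by rw [← he]; rfl
    simpa [this] using e.apply_symm_apply g
  have hlam : lam2 = ⟪H x, x⟫ := by
    rw [hlam2, hHx]
  have hlam_ge : (m / 2) * ‖x‖ ^ 2 ≤ lam2 := by rw [hlam]; exact hcoerc x
  have hΔx : ⟪A Δ, Δ⟫ = ⟪A x, x⟫ := by
    rw [hΔ]; simp [inner_neg_neg]
  rw [hΔx]
  have hAx : ⟪A x, x⟫ = ⟪H x, x⟫ - ⟪(H - A) x, x⟫ := by
    rw [hsplit x]; ring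
  rw [hAx, ← hlam]
  have hEx := (abs_le.mp (hE x)).1
  have hxn : ‖x‖ ^ 2 ≤ 2 / m * lam2 := by
    rw [div_mul_eq_mul_div, le_div_iff₀ hm]; nlinarith
  have : γh * ‖x‖ ^ 2 ≤ γh * (2 / m * lam2) := by
    exact mul_le_mul_of_nonneg_left hxn hγh0
  have hgoal : lam2 - ⟪(H - A) x, x⟫ ≤ lam2 + γh * (2 / m * lam2) := by nlinarith
  calc lam2 - ⟪(H - A) x, x⟫ ≤ lam2 + γh * (2 / m * lam2) := hgoal
  _ = lam2 * (1 + 2 * γh / m) := by field_simp
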